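/- arXiv:1509.07272 — 3 statements merged into one kernel-verified Lean document; each statement's English description precedes it below -/
import Mathlib

section
/- Let F be a lift of an orientation-preserving circle homeomorphism. If the induced circle map has a periodic point of prime period q, then every periodic point of the induced circle map has the same period q. -/
/-- A strictly monotone map with a periodic point fixes that point. -/
private lemma strictMono_fixed_of_iterate {g : ℝ → ℝ} (hg : StrictMono g)
    {k : ℕ} (hk : 0 < k) {z : ℝ} (hz : g^[k] z = z) : g z = z := by
  rcases lt_trichotomy (g z) z with h | h | h
  · exfalso
    have key : ∀ n : ℕ, g^[n + 1] z < z := by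
      intro n
      induction n with
      | zero => simpa using h
      | succ m ih =>
        have := hg ih
        calc g^[m + 1 + 1] z = g (g^[m + 1] z) := Function.iterate_succ_apply' g _ z
          _ < g z := this
          _ < z := h
    have := key (k - 1)
    rw [Nat.sub_add_cancel hk, hz] at this
    exact lt_irrefl _ this
  · exact h
  · exfalso
    have key : ∀ n : ℕ, z < g^[n + 1] z := by
      intro n
      induction n with
      | zero => simpa using h
      | succ m ih =>
        have := hg ih
        calc z < g z := h
          _ < g (g^[m + 1] z) := this
          _ = g^[m + 1 + 1] z := (Function.iterate_succ_apply' g _ z).symm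
    have := key (k - 1)
    rw [Nat.sub_add_cancel hk, hz] at this
    exact lt_irrefl _ this

private lemma F_add_int {F : ℝ → ℝ} (hper : ∀ x : ℝ, F (x + 1) = F x + 1) :
    ∀ (n : ℤ) (z : ℝ), F (z + n) = F z + n := by
  have key : ∀ z : ℝ, F (z - 1) = F z - 1 := by
    intro z
    have h := hper (z - 1)
    rw [sub_add_cancel] at h
    linarith
  intro n
  induction n using Int.induction_on with
  | zero => simp
  | succ k ih =>
    intro z
    have h := ih z
    push_cast at h ⊢
    rw [show z + ((k : ℝ) + 1) = (z + k) + 1 by ring, hper, h]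
    ring
  | pred k ih =>
    intro z
    have h := ih z
    push_cast at h ⊢
    rw [show z + (-(k : ℝ) - 1) = (z + -(k : ℝ)) - 1 by ring, key, h]
    ring

private lemma iter_add_int {F : ℝ → ℝ} (hper : ∀ x : ℝ, F (x + 1) = F x + 1) :
    ∀ (n : ℕ) (m : ℤ) (z : ℝ), F^[n] (z + m) = F^[n] z + m := by
  intro n
  induction n with
  | zero => simp
  | succ k ih =>
    intro m z
    rw [Function.iterate_succ_apply, F_add_int hper, ih, ← Function.iterate_succ_apply]

/-- If minimal period q with rotation p, then p and q are coprime. -/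
private lemma coprime_aux {F : ℝ → ℝ} (hmono : StrictMono F)
    (hper : ∀ x : ℝ, F (x + 1) = F x + 1)
    {q : ℕ} (hq : 0 < q) {x : ℝ} {p : ℤ}
    (hx : F^[q] x = x + (p : ℝ))
    (hmin : ∀ q' : ℕ, 0 < q' → (∃ p' : ℤ, F^[q'] x = x + (p' : ℝ)) → q ≤ q') :
    Nat.Coprime p.natAbs q := by
  set k : ℕ := Int.gcd p q with hk
  have hkq : k ∣ q := by
    have := Int.gcd_dvd_right (a := p) (b := (q : ℤ))
    exact_mod_cast this
  have hkp : (k : ℤ) ∣ p := Int.gcd_dvd_left p q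
  have hkpos : 0 < k := Int.gcd_pos_of_ne_zero_right p (by exact_mod_cast hq.ne')
  obtain ⟨q₀, hq₀⟩ := hkq
  obtain ⟨p₀, hp₀⟩ := hkp
  have hq₀pos : 0 < q₀ := by
    rcases Nat.eq_zero_or_pos q₀ with h | h
    · subst h; omega
    · exact h
  -- G = F^[q₀] - p₀
  set G : ℝ → ℝ := fun z => F^[q₀] z - (p₀ : ℝ) with hG
  have hGmono : StrictMono G := fun a b hab => by
    simp only [hG]
    exact sub_lt_sub_right (hmono.iterate q₀ hab) _
  have hGiter : ∀ (j : ℕ) (z : ℝ), G^[j] z = F^[q₀ * j] z - (p₀ : ℝ) * j := by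
    intro j
    induction j with
    | zero => simp
    | succ m ih =>
      intro z
      rw [Function.iterate_succ_apply', ih]
      simp only [hG]
      rw [show F^[q₀ * m] z - (p₀ : ℝ) * m = F^[q₀ * m] z + ((-(p₀ * m) : ℤ) : ℝ) by
        push_cast; ring]
      rw [iter_add_int hper]
      rw [← Function.iterate_add_apply]
      rw [show q₀ + q₀ * m = q₀ * (m + 1) by ring]
      push_cast
      ring
  have hGk : G^[k] x = x := by
    rw [hGiter k x]
    rw [show q₀ * k = q by rw [hq₀]; ring]
    rw [hx]
    have : (p₀ : ℝ) * k = (p : ℝ) := by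
      rw [hp₀]; push_cast; ring
    rw [this]; ring
  have hGfix : G x = x := strictMono_fixed_of_iterate hGmono hkpos hGk
  have hxq₀ : F^[q₀] x = x + (p₀ : ℝ) := by
    have := hGfix
    simp only [hG] at this
    linarith
  have hle : q ≤ q₀ := hmin q₀ hq₀pos ⟨p₀, hxq₀⟩
  have hk1 : k = 1 := by
    rcases Nat.lt_or_ge k 2 with h | h
    · omega
    · exfalso; nlinarith [hq₀, hle, hq₀pos]
  have : Int.gcd p (q : ℤ) = 1 := by rw [← hk, hk1]
  simpa [Int.gcd] using this

/-- If the induced circle map has a periodic point of prime period q, then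
every periodic point has the same prime period q. -/
theorem periodic_points_same_period
    (F : ℝ → ℝ) (hcont : Continuous F) (hmono : StrictMono F)
    (hper : ∀ x : ℝ, F (x + 1) = F x + 1)
    (q : ℕ) (hq : 0 < q) (x : ℝ) (p : ℤ)
    (hx : F^[q] x = x + (p : ℝ))
    (hmin : ∀ q' : ℕ, 0 < q' → (∃ p' : ℤ, F^[q'] x = x + (p' : ℝ)) → q ≤ q')
    (y : ℝ) (q' : ℕ) (hq' : 0 < q') (p' : ℤ)
    (hy : F^[q'] y = y + (p' : ℝ))
    (hmin' : ∀ q'' : ℕ, 0 < q'' → (∃ p'' : ℤ, F^[q''] y = y + (p'' : ℝ)) → q' ≤ q'') :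
    q' = q := by
  -- iterate periodicity
  have hmul : ∀ (a : ℕ) (c : ℤ) (z : ℝ), F^[a] z = z + (c : ℝ) →
      ∀ j : ℕ, F^[a * j] z = z + (c : ℝ) * j := by
    intro a c z hz j
    induction j with
    | zero => simp
    | succ m ih =>
      rw [show a * (m + 1) = a + a * m by ring, Function.iterate_add_apply, ih]
      rw [show z + (c : ℝ) * m = z + ((c * m : ℤ) : ℝ) by push_cast; ring]
      rw [iter_add_int hper, hz]
      push_cast
      ring
  -- key: p * q' = p' * q
  have hxN : F^[q * q'] x = x + ((p : ℝ) * q') := hmul q p x hx q'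
  have hyN : F^[q * q'] y = y + ((p' : ℝ) * q) := by
    have := hmul q' p' y hy q
    rwa [show q' * q = q * q' by ring] at this
  set G : ℝ → ℝ := fun z => F^[q * q'] z - ((p : ℤ) * q' : ℤ) with hG
  have hGmono : StrictMono G := fun a b hab => by
    simp only [hG]
    exact sub_lt_sub_right (hmono.iterate _ hab) _
  have hGadd : ∀ (n : ℤ) (z : ℝ), G (z + n) = G z + n := by
    intro n z
    simp only [hG]
    rw [iter_add_int hper]
    ring
  have hGx : ∀ n : ℤ, G (x + n) = x + n := by
    intro n
    rw [hGadd]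
    simp only [hG, hxN]
    push_cast
    ring
  have hGy : G y = y + ((p' * q - p * q' : ℤ) : ℝ) := by
    simp only [hG, hyN]
    push_cast
    ring
  -- bound : z - 1 < G z < z + 1
  have hbound : ∀ z : ℝ, z - 1 < G z ∧ G z < z + 1 := by
    intro z
    set n : ℤ := ⌊z - x⌋ with hn
    have h1 : x + n ≤ z := by
      have := Int.floor_le (z - x)
      linarith
    have h2 : z < x + n + 1 := by
      have := Int.lt_floor_add_one (z - x)
      linarith
    constructor
    · have : G (x + n) ≤ G z := hGmono.monotone (by linarith)
      rw [hGx n] at this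
      linarith
    · have h3 : G z < G (x + ((n : ℝ) + 1)) := hGmono (by linarith)
      have h4 := hGx (n + 1)
      push_cast at h4
      rw [h4] at h3
      linarith
  have heq : p' * q = p * q' := by
    obtain ⟨hb1, hb2⟩ := hbound y
    rw [hGy] at hb1 hb2
    have h1 : (-1 : ℝ) < ((p' * q - p * q' : ℤ) : ℝ) := by linarith
    have h2 : ((p' * q - p * q' : ℤ) : ℝ) < 1 := by linarith
    have : p' * q - p * q' = 0 := by
      have h1' : (-1 : ℤ) < p' * q - p * q' := by exact_mod_cast h1
      have h2' : p' * q - p * q' < 1 := by exact_mod_cast h2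
      omega
    omega
  -- coprimality
  have hc : Nat.Coprime p.natAbs q := coprime_aux hmono hper hq hx hmin
  have hc' : Nat.Coprime p'.natAbs q' := coprime_aux hmono hper hq' hy hmin'
  -- conclude q = q'
  have hnat : p'.natAbs * q = p.natAbs * q' := by
    have := congrArg Int.natAbs heq
    simpa [Int.natAbs_mul] using this
  have hdvd1 : q ∣ q' := by
    have h1 : q ∣ p.natAbs * q' := ⟨p'.natAbs, by rw [← hnat, Nat.mul_comm]⟩
    exact (Nat.Coprime.dvd_of_dvd_mul_left (Nat.Coprime.symm hc) h1)
  have hdvd2 : q' ∣ q := by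
    have h1 : q' ∣ p'.natAbs * q := ⟨p.natAbs, by rw [hnat, Nat.mul_comm]⟩
    exact (Nat.Coprime.dvd_of_dvd_mul_left (Nat.Coprime.symm hc') h1)
  exact Nat.dvd_antisymm hdvd2 hdvd1
end

section
/- Interval Newton existence and uniqueness: Let g : ℝ → ℝ be continuously differentiable on a compact interval [a,b], let ž ∈ [a,b], and suppose every derivative value g'(z) for z ∈ [a,b] lies in an interval [c,d] with 0 ∉ [c,d]. If the interval Newton image N = { ž − g(ž)/m : m ∈ [c,d] } is contained in [a,b], then there exists a unique z* ∈ [a,b] with g(z*) = 0. -/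
lemma interval_newton_aux
    (g g' : ℝ → ℝ) (a b c d zc : ℝ)
    (hab : a ≤ b) (hcd : c ≤ d)
    (hzc : zc ∈ Set.Icc a b)
    (hderiv : ∀ z ∈ Set.Icc a b, HasDerivAt g (g' z) z)
    (hc : 0 < c)
    (hmem : ∀ z ∈ Set.Icc a b, g' z ∈ Set.Icc c d)
    (hN : {w : ℝ | ∃ m ∈ Set.Icc c d, w = zc - g zc / m} ⊆ Set.Icc a b) :
    ∃! z : ℝ, z ∈ Set.Icc a b ∧ g z = 0 := by
  have hgc : ContinuousOn g (Set.Icc a b) := fun z hz =>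
    (hderiv z hz).continuousAt.continuousWithinAt
  have hmono : StrictMonoOn g (Set.Icc a b) := by
    apply strictMonoOn_of_deriv_pos (convex_Icc a b) hgc
    intro z hz
    rw [interior_Icc] at hz
    have hz' : z ∈ Set.Icc a b := Set.mem_Icc_of_Ioo hz
    rw [(hderiv z hz').deriv]
    exact lt_of_lt_of_le hc (hmem z hz').1
  have hw : zc - g zc / c ∈ Set.Icc a b := hN ⟨c, ⟨le_refl c, hcd⟩, rfl⟩
  set w := zc - g zc / c with hwdef
  have key : ∃ z ∈ Set.Icc a b, g z = 0 := by
    rcases lt_trichotomy (g zc) 0 with hgz | hgz | hgz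
    · -- g zc < 0, w > zc, g w ≥ 0
      have hlt : zc < w := by
        have : g zc / c < 0 := div_neg_of_neg_of_pos hgz hc
        rw [hwdef]; linarith
      obtain ⟨ξ, hξ, hslope⟩ := exists_hasDerivAt_eq_slope g g' hlt
        (hgc.mono (Set.Icc_subset_Icc hzc.1 hw.2))
        (fun x hx => hderiv x ⟨le_trans hzc.1 hx.1.le, le_trans hx.2.le hw.2⟩)
      have hξab : ξ ∈ Set.Icc a b := ⟨le_trans hzc.1 hξ.1.le, le_trans hξ.2.le hw.2⟩
      have h1 : g' ξ ≥ c := (hmem ξ hξab).1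
      have hcne : c ≠ 0 := ne_of_gt hc
      have hct : c * (w - zc) = - g zc := by rw [hwdef]; field_simp; ring
      have hslope' : g' ξ * (w - zc) = g w - g zc :=
        (eq_div_iff (by linarith : w - zc ≠ 0)).mp hslope
      have h4 : g w ≥ 0 := by
        nlinarith [mul_nonneg (by linarith : (0:ℝ) ≤ g' ξ - c)
          (by linarith : (0:ℝ) ≤ w - zc)]
      obtain ⟨z, hz, hz0⟩ := intermediate_value_Icc hlt.le
        (hgc.mono (Set.Icc_subset_Icc hzc.1 hw.2)) (⟨hgz.le, h4⟩ : (0:ℝ) ∈ Set.Icc (g zc) (g w))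
      exact ⟨z, ⟨le_trans hzc.1 hz.1, le_trans hz.2 hw.2⟩, hz0⟩
    · exact ⟨zc, hzc, hgz⟩
    · -- g zc > 0, w < zc, g w ≤ 0
      have hlt : w < zc := by
        have : 0 < g zc / c := div_pos hgz hc
        rw [hwdef]; linarith
      obtain ⟨ξ, hξ, hslope⟩ := exists_hasDerivAt_eq_slope g g' hlt
        (hgc.mono (Set.Icc_subset_Icc hw.1 hzc.2))
        (fun x hx => hderiv x ⟨le_trans hw.1 hx.1.le, le_trans hx.2.le hzc.2⟩)
      have hξab : ξ ∈ Set.Icc a b := ⟨le_trans hw.1 hξ.1.le, le_trans hξ.2.le hzc.2⟩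
      have h1 : g' ξ ≥ c := (hmem ξ hξab).1
      have hcne : c ≠ 0 := ne_of_gt hc
      have hct : c * (zc - w) = g zc := by rw [hwdef]; field_simp; ring
      have hslope' : g' ξ * (zc - w) = g zc - g w :=
        (eq_div_iff (by intro h; nlinarith : zc - w ≠ 0)).mp hslope
      have h4 : g w ≤ 0 := by
        nlinarith [mul_nonneg (by linarith : (0:ℝ) ≤ g' ξ - c)
          (by linarith : (0:ℝ) ≤ zc - w)]
      obtain ⟨z, hz, hz0⟩ := intermediate_value_Icc hlt.le
        (hgc.mono (Set.Icc_subset_Icc hw.1 hzc.2)) (⟨h4, hgz.le⟩ : (0:ℝ) ∈ Set.Icc (g w) (g zc))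
      exact ⟨z, ⟨le_trans hw.1 hz.1, le_trans hz.2 hzc.2⟩, hz0⟩
  obtain ⟨z, hz, hz0⟩ := key
  refine ⟨z, ⟨hz, hz0⟩, fun y ⟨hy, hy0⟩ => ?_⟩
  exact hmono.injOn hy hz (by rw [hy0, hz0])

/-- Interval Newton existence and uniqueness: if the interval Newton image
`N = {ž − g(ž)/m : m ∈ [c,d]}` is contained in `[a,b]`, where the derivative
of g on [a,b] has values in [c,d] with 0 ∉ [c,d], then g has a unique zero
in [a,b]. -/
theorem interval_newton_existence_uniqueness
    (g g' : ℝ → ℝ) (a b c d zc : ℝ)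
    (hab : a ≤ b) (hcd : c ≤ d)
    (hzc : zc ∈ Set.Icc a b)
    (hderiv : ∀ z ∈ Set.Icc a b, HasDerivAt g (g' z) z)
    (hcontd : ContinuousOn g' (Set.Icc a b))
    (h0 : (0 : ℝ) ∉ Set.Icc c d)
    (hmem : ∀ z ∈ Set.Icc a b, g' z ∈ Set.Icc c d)
    (hN : {w : ℝ | ∃ m ∈ Set.Icc c d, w = zc - g zc / m} ⊆ Set.Icc a b) :
    ∃! z : ℝ, z ∈ Set.Icc a b ∧ g z = 0 := by
  rw [Set.mem_Icc, not_and_or, not_le, not_le] at h0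
  rcases h0 with hc | hd
  · exact interval_newton_aux g g' a b c d zc hab hcd hzc hderiv hc hmem hN
  · -- d < 0: apply aux to -g
    have := interval_newton_aux (fun x => - g x) (fun x => - g' x) a b (-d) (-c) zc
      hab (by linarith) hzc
      (fun z hz => (hderiv z hz).neg)
      (by linarith)
      (fun z hz => ⟨neg_le_neg (hmem z hz).2, neg_le_neg (hmem z hz).1⟩)
      (fun w hw => by
        obtain ⟨m, hm, rfl⟩ := hw
        exact hN ⟨-m, ⟨by linarith [hm.2], by linarith [hm.1]⟩, by
          rw [neg_div, div_neg]⟩)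
    obtain ⟨z, ⟨hz, hz0⟩, huniq⟩ := this
    exact ⟨z, ⟨hz, by simpa using hz0⟩, fun y ⟨hy, hy0⟩ => huniq y ⟨hy, by simp [hy0]⟩⟩
end

section
/- Interval Newton nonexistence: Let g : ℝ → ℝ be continuously differentiable on [a,b], ž ∈ [a,b], and suppose g'(z) ∈ [c,d] for all z ∈ [a,b] with 0 ∉ [c,d]. If the set N = { ž − g(ž)/m : m ∈ [c,d] } is disjoint from [a,b], then g has no zero in [a,b]. -/
/-- Interval Newton nonexistence: if the interval Newton image
`N = {ž − g(ž)/m : m ∈ [c,d]}` is disjoint from `[a,b]`, where the derivative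
of g on [a,b] has values in [c,d] with 0 ∉ [c,d], then g has no zero in [a,b]. -/
theorem interval_newton_nonexistence
    (g g' : ℝ → ℝ) (a b c d zc : ℝ)
    (hab : a ≤ b) (hcd : c ≤ d)
    (hzc : zc ∈ Set.Icc a b)
    (hderiv : ∀ z ∈ Set.Icc a b, HasDerivAt g (g' z) z)
    (hcontd : ContinuousOn g' (Set.Icc a b))
    (h0 : (0 : ℝ) ∉ Set.Icc c d)
    (hmem : ∀ z ∈ Set.Icc a b, g' z ∈ Set.Icc c d)
    (hN : Disjoint {w : ℝ | ∃ m ∈ Set.Icc c d, w = zc - g zc / m} (Set.Icc a b)) :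
    ∀ z ∈ Set.Icc a b, g z ≠ 0 := by
  intro z hz hgz
  -- it suffices to show z ∈ N
  have key : ∃ m ∈ Set.Icc c d, z = zc - g zc / m := by
    have hIcc : ∀ s t : ℝ, a ≤ s → t ≤ b → Set.Icc s t ⊆ Set.Icc a b := by
      intro s t hs ht x hx
      exact ⟨hs.trans hx.1, hx.2.trans ht⟩
    have hcont : ContinuousOn g (Set.Icc a b) := fun x hx =>
      (hderiv x hx).continuousAt.continuousWithinAt
    rcases lt_trichotomy z zc with h | h | h
    · have hsub : Set.Icc z zc ⊆ Set.Icc a b := hIcc z zc hz.1 hzc.2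
      obtain ⟨ξ, hξ, hξ'⟩ := exists_hasDerivAt_eq_slope g g' h
        (hcont.mono hsub)
        (fun x hx => hderiv x (hsub (Set.Ioo_subset_Icc_self hx)))
      have hξab : ξ ∈ Set.Icc a b := hsub (Set.Ioo_subset_Icc_self hξ)
      have hm : g' ξ ∈ Set.Icc c d := hmem ξ hξab
      have hm0 : g' ξ ≠ 0 := fun h' => h0 (h' ▸ hm)
      refine ⟨g' ξ, hm, ?_⟩
      have hne : zc - z ≠ 0 := sub_ne_zero.mpr h.ne'
      have hgzc : g zc = g' ξ * (zc - z) := by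
        rw [hξ', hgz]; field_simp; ring
      rw [hgzc]; field_simp; ring
    · refine ⟨c, ⟨le_refl c, hcd⟩, ?_⟩
      rw [← h, hgz]
      simp
    · have hsub : Set.Icc zc z ⊆ Set.Icc a b := hIcc zc z hzc.1 hz.2
      obtain ⟨ξ, hξ, hξ'⟩ := exists_hasDerivAt_eq_slope g g' h
        (hcont.mono hsub)
        (fun x hx => hderiv x (hsub (Set.Ioo_subset_Icc_self hx)))
      have hξab : ξ ∈ Set.Icc a b := hsub (Set.Ioo_subset_Icc_self hξ)
      have hm : g' ξ ∈ Set.Icc c d := hmem ξ hξab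
      have hm0 : g' ξ ≠ 0 := fun h' => h0 (h' ▸ hm)
      refine ⟨g' ξ, hm, ?_⟩
      have hne : z - zc ≠ 0 := sub_ne_zero.mpr h.ne'
      have hgzc : g zc = g' ξ * (zc - z) := by
        rw [hξ', hgz]; field_simp; ring
      rw [hgzc]; field_simp; ring
  exact Set.disjoint_left.mp hN key hz
end
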